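/- Let G be a k×n generator matrix over F_q of rank k generating an [n,k,t] batch code with reconstruction sets of size at most r, and let d be the minimum Hamming distance of the code {x·G : x ∈ F_q^k}. Then n ≥ k + d + max_{1 ≤ β ≤ t, β ∈ ℕ} { (β−1)·(⌈ k/(r·β − β + 1) ⌉ − 1) } − 1. -/

import Mathlib

/-- Some `F`-linear combination of the columns of `G` indexed by `T` equals the vector `v`. -/
def ColLinComb {F : Type*} [Field F] {k n : ℕ} (G : Matrix (Fin k) (Fin n) F)
    (T : Finset (Fin n)) (v : Fin k → F) : Prop :=
  ∃ c : Fin n → F, ∑ j ∈ T, c j • G.transpose j = v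

/-- `G` generates an `[n,k,t]` batch code with reconstruction sets of size at most `r`. -/
def IsBatchCodeWith {F : Type*} [Field F] {k n : ℕ} (G : Matrix (Fin k) (Fin n) F)
    (t r : ℕ) : Prop :=
  ∀ idx : Fin t → Fin k, ∃ T : Fin t → Finset (Fin n),
    (∀ j₁ j₂ : Fin t, j₁ ≠ j₂ → Disjoint (T j₁) (T j₂)) ∧
    ∀ j : Fin t, (T j).card ≤ r ∧ ColLinComb G (T j) (Pi.single (idx j) 1)

open Submodule Module

section aux
variable {F : Type*} [Field F] {k n : ℕ} (G : Matrix (Fin k) (Fin n) F)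

/-- Span of the columns of `G` indexed by the finset `S`. -/
noncomputable def SpanCols (S : Finset (Fin n)) : Submodule F (Fin k → F) :=
  Submodule.span F (G.transpose '' ↑S)

lemma finrank_SpanCols_le (S : Finset (Fin n)) : finrank F (SpanCols G S) ≤ S.card := by
  classical
  rw [show SpanCols G S = Submodule.span F ((S.image G.col : Finset _) : Set (Fin k → F)) by
    rw [Finset.coe_image]; rfl]
  have h := finrank_span_finset_le_card (R := F) (S.image G.col)
  rw [Set.finrank] at h
  exact h.trans Finset.card_image_le

lemma SpanCols_mono {S S' : Finset (Fin n)} (h : S ⊆ S') : SpanCols G S ≤ SpanCols G S' :=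
  Submodule.span_mono (Set.image_mono (by exact_mod_cast h))

lemma col_mem_SpanCols {S : Finset (Fin n)} {j : Fin n} (hj : j ∈ S) :
    G.transpose j ∈ SpanCols G S :=
  Submodule.subset_span ⟨j, by exact_mod_cast hj, rfl⟩

lemma sum_mem_SpanCols {S : Finset (Fin n)} (c : Fin n → F) :
    ∑ j ∈ S, c j • G.transpose j ∈ SpanCols G S :=
  Submodule.sum_smul_mem _ _ (fun j hj => col_mem_SpanCols G hj)

lemma SpanCols_union (A B : Finset (Fin n)) :
    SpanCols G (A ∪ B) = SpanCols G A ⊔ SpanCols G B := by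
  rw [SpanCols, SpanCols, SpanCols, Finset.coe_union, ← Submodule.span_union]
  congr 1
  exact Set.image_union _ _ _

lemma myfinrank_sup_le (W₁ W₂ : Submodule F (Fin k → F)) :
    finrank F ↥(W₁ ⊔ W₂) ≤ finrank F W₁ + finrank F W₂ := by
  have := Submodule.finrank_sup_add_finrank_inf_eq W₁ W₂
  omega


/-- If a nontrivial linear combination of the columns indexed by `A` lies in `W`,
then adjoining the columns of `A` to `W` gains at most `A.card - 1` dimensions. -/
lemma dep_step (W : Submodule F (Fin k → F)) (A : Finset (Fin n)) (c : Fin n → F)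
    (hv : ∑ j ∈ A, c j • G.transpose j ∈ W) {j₀ : Fin n} (hj₀ : j₀ ∈ A) (hc : c j₀ ≠ 0) :
    finrank F ↥(W ⊔ SpanCols G A) + 1 ≤ finrank F W + A.card := by
  have hsub : SpanCols G A ≤ W ⊔ SpanCols G (A.erase j₀) := by
    rw [SpanCols, Submodule.span_le]
    rintro _ ⟨j, hj, rfl⟩
    rw [Finset.mem_coe] at hj
    by_cases hjj : j = j₀
    · subst hjj
      have hsum : c j • G.transpose j + ∑ x ∈ A.erase j, c x • G.transpose x
          = ∑ x ∈ A, c x • G.transpose x := Finset.add_sum_erase A (fun x => c x • G.transpose x) hj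
      have h2 : ∑ x ∈ A.erase j, c x • G.transpose x ∈ W ⊔ SpanCols G (A.erase j) :=
        Submodule.mem_sup_right (sum_mem_SpanCols G c)
      have h1 : ∑ x ∈ A, c x • G.transpose x ∈ W ⊔ SpanCols G (A.erase j) :=
        Submodule.mem_sup_left hv
      have : c j • G.transpose j ∈ W ⊔ SpanCols G (A.erase j) := by
        have := Submodule.sub_mem _ h1 h2
        rwa [← hsum, add_sub_cancel_right] at this
      have := Submodule.smul_mem _ (c j)⁻¹ this
      rwa [inv_smul_smul₀ hc] at this
    · exact Submodule.mem_sup_right (col_mem_SpanCols G (Finset.mem_erase.2 ⟨hjj, hj⟩))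
  have hA : 1 ≤ A.card := Finset.card_pos.2 ⟨j₀, hj₀⟩
  have hle : finrank F ↥(W ⊔ SpanCols G A) ≤ finrank F ↥(W ⊔ SpanCols G (A.erase j₀)) :=
    Submodule.finrank_mono (sup_le le_sup_left hsub)
  have h3 : finrank F ↥(W ⊔ SpanCols G (A.erase j₀)) ≤ finrank F W + (A.erase j₀).card :=
    (myfinrank_sup_le W _).trans (by
      have := finrank_SpanCols_le G (A.erase j₀); omega)
  have hcard : (A.erase j₀).card = A.card - 1 := Finset.card_erase_of_mem hj₀
  omega

end aux
section step
variable {F : Type*} [Field F] {k n : ℕ} (G : Matrix (Fin k) (Fin n) F)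

lemma top_le_span_singles {V : Submodule F (Fin k → F)}
    (h : ∀ i : Fin k, Pi.single i 1 ∈ V) : (⊤ : Submodule F (Fin k → F)) ≤ V := by
  intro v _
  have hv : ∑ i, v i • (Pi.single i (1 : F) : Fin k → F) = v := by
    have h2 : ∀ i : Fin k, v i • (Pi.single i (1 : F) : Fin k → F) = Pi.single i (v i) := by
      intro i; funext j
      by_cases hij : j = i <;> simp [Pi.single_apply, hij]
    simp_rw [h2]
    exact Finset.univ_sum_single v
  rw [← hv]
  exact Submodule.sum_mem _ (fun i _ => Submodule.smul_mem _ _ (h i))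

lemma batch_step {t r β : ℕ} (hβ1 : 1 ≤ β) (hβt : β ≤ t) (hB : IsBatchCodeWith G t r)
    (S : Finset (Fin n)) (hlt : finrank F (SpanCols G S) < k) :
    ∃ S' : Finset (Fin n),
      S.card + finrank F (SpanCols G S') + β ≤ S'.card + finrank F (SpanCols G S) + 1 ∧
      finrank F (SpanCols G S') + β ≤ finrank F (SpanCols G S) + β * r + 1 := by
  classical
  -- find a coordinate not in the span
  have hex_i : ∃ i : Fin k, Pi.single i 1 ∉ SpanCols G S := by
    by_contra h; push_neg at h
    have htop : SpanCols G S = ⊤ := eq_top_iff.2 (top_le_span_singles h)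
    rw [htop] at hlt
    rw [finrank_top, Module.finrank_pi] at hlt
    simp only [Fintype.card_fin] at hlt
    omega
  obtain ⟨i, hi⟩ := hex_i
  obtain ⟨T, hdisj, hT⟩ := hB (fun _ => i)
  set N : ℕ → Finset (Fin n) := fun ℓ => if h : ℓ < t then T ⟨ℓ, h⟩ \ S else ∅ with hN
  set U : ℕ → Finset (Fin n) := fun j => S ∪ (Finset.range j).biUnion N with hU
  have hNr : ∀ ℓ, (N ℓ).card ≤ r := by
    intro ℓ; rw [hN]; dsimp only
    split
    · exact (Finset.card_le_card (Finset.sdiff_subset)).trans (hT _).1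
    · simp
  have hNdisjS : ∀ ℓ, Disjoint (N ℓ) S := by
    intro ℓ; rw [hN]; dsimp only
    split
    · exact Finset.sdiff_disjoint
    · simp
  have hNdisj : ∀ ℓ₁ ℓ₂ : ℕ, ℓ₁ ≠ ℓ₂ → Disjoint (N ℓ₁) (N ℓ₂) := by
    intro ℓ₁ ℓ₂ hne; rw [hN]; dsimp only
    split
    · split
      · refine Finset.disjoint_of_subset_left Finset.sdiff_subset
          (Finset.disjoint_of_subset_right Finset.sdiff_subset (hdisj _ _ ?_))
        simp [Fin.ext_iff, hne]
      · simp
    · simp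
  have hUmono : ∀ a b : ℕ, a ≤ b → U a ⊆ U b := by
    intro a b hab
    exact Finset.union_subset_union_right (Finset.biUnion_subset_biUnion_of_subset_left _
      (Finset.range_subset_range.2 hab))
  have hUsucc : ∀ j, U (j + 1) = U j ∪ N j := by
    intro j
    show S ∪ (Finset.range (j + 1)).biUnion N = (S ∪ (Finset.range j).biUnion N) ∪ N j
    rw [Finset.range_add_one, Finset.biUnion_insert, Finset.union_comm (N j), ← Finset.union_assoc]
  have h0t : 0 < t := lt_of_lt_of_le hβ1 hβt
  have hU1 : U 1 = S ∪ N 0 := by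
    rw [show (1 : ℕ) = 0 + 1 from rfl, hUsucc 0]
    simp [hU]
  have hei : Pi.single i (1 : F) ∈ SpanCols G (U 1) := by
    obtain ⟨c, hc⟩ := (hT ⟨0, h0t⟩).2
    rw [← hc]
    refine SpanCols_mono G ?_ (sum_mem_SpanCols G c)
    intro x hx
    rw [hU1, hN]
    simp only [Finset.mem_union, dif_pos h0t, Finset.mem_sdiff]
    by_cases hxS : x ∈ S <;> tauto
  -- the key chain inequality
  have hchain : ∀ j : ℕ, 1 ≤ j → j ≤ β →
      finrank F (SpanCols G (U j)) + j ≤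
        finrank F (SpanCols G S) + (∑ ℓ ∈ Finset.range j, (N ℓ).card) + 1 := by
    intro j hj1 hjβ
    induction j with
    | zero => omega
    | succ j ih =>
      rcases Nat.eq_zero_or_pos j with hj0 | hjpos
      · subst hj0
        rw [hU1, SpanCols_union]
        have h1 := myfinrank_sup_le (SpanCols G S) (SpanCols G (N 0))
        have h2 := finrank_SpanCols_le G (N 0)
        rw [Finset.sum_range_one]
        omega
      · have hjβ' : j < β := hjβ
        have ihr := ih hjpos (le_of_lt hjβ')
        have hjt : j < t := lt_of_lt_of_le hjβ' hβt
        obtain ⟨c, hc⟩ := (hT ⟨j, hjt⟩).2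
        have hNj : N j = T ⟨j, hjt⟩ \ S := by rw [hN]; simp [hjt]
        have hsd : T ⟨j, hjt⟩ \ (T ⟨j, hjt⟩ ∩ S) = T ⟨j, hjt⟩ \ S :=
          Finset.sdiff_inter_self_left _ _
        have hsplit : ∑ x ∈ N j, c x • G.transpose x
            + ∑ x ∈ T ⟨j, hjt⟩ ∩ S, c x • G.transpose x
            = ∑ x ∈ T ⟨j, hjt⟩, c x • G.transpose x := by
          rw [hNj, ← hsd]
          exact Finset.sum_sdiff (Finset.inter_subset_left)
        have hinter : ∑ x ∈ T ⟨j, hjt⟩ ∩ S, c x • G.transpose x ∈ SpanCols G S :=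
          SpanCols_mono G Finset.inter_subset_right (sum_mem_SpanCols G c)
        have hvW : ∑ x ∈ N j, c x • G.transpose x ∈ SpanCols G (U j) := by
          have heq : ∑ x ∈ N j, c x • G.transpose x
              = Pi.single i 1 - ∑ x ∈ T ⟨j, hjt⟩ ∩ S, c x • G.transpose x := by
            rw [← hc, ← hsplit]; abel
          rw [heq]
          refine Submodule.sub_mem _ ?_ ?_
          · exact SpanCols_mono G (hUmono 1 j hjpos) hei
          · exact SpanCols_mono G (Finset.subset_union_left) hinter
        have hexc : ∃ j₀ ∈ N j, c j₀ ≠ 0 := by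
          by_contra h; push_neg at h
          have hz : ∑ x ∈ N j, c x • G.transpose x = 0 :=
            Finset.sum_eq_zero (fun x hx => by rw [h x hx, zero_smul])
          apply hi
          have : ∑ x ∈ T ⟨j, hjt⟩ ∩ S, c x • G.transpose x = Pi.single i 1 := by
            rw [← hc, ← hsplit, hz, zero_add]
          rw [← this]; exact hinter
        obtain ⟨j₀, hj₀, hcj₀⟩ := hexc
        have hdep := dep_step G (SpanCols G (U j)) (N j) c hvW hj₀ hcj₀
        rw [hUsucc j, SpanCols_union, Finset.sum_range_succ]
        omega
  -- cardinality of U β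
  have hcard : (U β).card = S.card + ∑ ℓ ∈ Finset.range β, (N ℓ).card := by
    rw [hU]; dsimp only
    rw [Finset.card_union_of_disjoint, Finset.card_biUnion]
    · intro x _ y _ hxy; exact hNdisj x y hxy
    · rw [Finset.disjoint_biUnion_right]
      intro ℓ _; exact (hNdisjS ℓ).symm
  have hSig : ∑ ℓ ∈ Finset.range β, (N ℓ).card ≤ β * r := by
    calc ∑ ℓ ∈ Finset.range β, (N ℓ).card ≤ ∑ _ℓ ∈ Finset.range β, r :=
          Finset.sum_le_sum (fun ℓ _ => hNr ℓ)
      _ = β * r := by rw [Finset.sum_const, Finset.card_range, smul_eq_mul]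
  have hfin := hchain β hβ1 le_rfl
  exact ⟨U β, by omega, by omega⟩

end step

section main
variable {F : Type*} [Field F] {k n : ℕ} (G : Matrix (Fin k) (Fin n) F)

lemma iterate {t r' β : ℕ} (hβ1 : 1 ≤ β) (hβt : β ≤ t)
    (hB : IsBatchCodeWith G t (r' + 1)) :
    ∀ s₀ : ℕ, s₀ * (r' * β + 1) < k →
    ∃ S : Finset (Fin n), finrank F (SpanCols G S) + s₀ * (β - 1) ≤ S.card ∧
      finrank F (SpanCols G S) ≤ s₀ * (r' * β + 1) := by
  intro s₀
  induction s₀ with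
  | zero =>
    intro _
    refine ⟨∅, ?_, ?_⟩ <;> simp [show SpanCols G ∅ = ⊥ from Submodule.span_eq_bot.2 (by rintro _ ⟨j, hj, rfl⟩; simp at hj)]
  | succ s ih =>
    intro hlt
    have hsk : s * (r' * β + 1) < k :=
      lt_of_le_of_lt (Nat.mul_le_mul_right _ (Nat.le_succ s)) hlt
    obtain ⟨S, h1, h2⟩ := ih hsk
    have hrk : finrank F (SpanCols G S) < k := lt_of_le_of_lt h2 hsk
    obtain ⟨S', hA, hB2⟩ := batch_step G hβ1 hβt hB S hrk
    refine ⟨S', ?_, ?_⟩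
    · have e1 : (s + 1) * (β - 1) = s * (β - 1) + (β - 1) := by ring
      rw [e1]
      generalize s * (β - 1) = D at h1 ⊢
      omega
    · have e2 : β * (r' + 1) = r' * β + β := by ring
      have e3 : (s + 1) * (r' * β + 1) = s * (r' * β + 1) + (r' * β + 1) := by ring
      rw [e3]
      rw [e2] at hB2
      generalize s * (r' * β + 1) = D1 at h2 ⊢
      generalize r' * β = D2 at hB2 ⊢
      omega

lemma extend_cols (htop : Submodule.span F (Set.range G.transpose) = ⊤) :
    ∀ c : ℕ, ∀ S : Finset (Fin n), finrank F (SpanCols G S) + c ≤ k →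
    ∃ S' : Finset (Fin n), S ⊆ S' ∧ S'.card = S.card + c ∧
      finrank F (SpanCols G S') = finrank F (SpanCols G S) + c := by
  have hfk : finrank F (Fin k → F) = k := by
    rw [Module.finrank_pi]; simp
  intro c
  induction c with
  | zero => intro S _; exact ⟨S, le_refl _, by omega, by omega⟩
  | succ c ih =>
    intro S hS
    have hne : SpanCols G S ≠ ⊤ := by
      intro h; rw [h, finrank_top, hfk] at hS; omega
    have hj : ∃ j : Fin n, G.transpose j ∉ SpanCols G S := by
      by_contra h; push_neg at h
      apply hne
      rw [eq_top_iff, ← htop, Submodule.span_le]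
      rintro _ ⟨j, rfl⟩; exact h j
    obtain ⟨j, hj⟩ := hj
    have hjS : j ∉ S := fun hmem => hj (col_mem_SpanCols G hmem)
    have hspan : SpanCols G (insert j S) = SpanCols G S ⊔ SpanCols G {j} := by
      rw [← SpanCols_union]; congr 1
      ext x; simp [or_comm]
    have hrk : finrank F (SpanCols G (insert j S)) = finrank F (SpanCols G S) + 1 := by
      have hub : finrank F (SpanCols G (insert j S)) ≤ finrank F (SpanCols G S) + 1 := by
        rw [hspan]
        have h1 := myfinrank_sup_le (SpanCols G S) (SpanCols G ({j} : Finset (Fin n)))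
        have h2 := finrank_SpanCols_le G ({j} : Finset (Fin n))
        simp only [Finset.card_singleton] at h2
        omega
      have hlb : finrank F (SpanCols G S) < finrank F (SpanCols G (insert j S)) := by
        apply Submodule.finrank_lt_finrank_of_lt
        refine lt_of_le_of_ne (SpanCols_mono G (Finset.subset_insert _ _)) ?_
        intro he; apply hj; rw [he]
        exact col_mem_SpanCols G (Finset.mem_insert_self j S)
      omega
    obtain ⟨S', hsub, hcard, hrank⟩ := ih (insert j S) (by omega)
    refine ⟨S', (Finset.subset_insert j S).trans hsub, ?_, ?_⟩
    · rw [Finset.card_insert_of_notMem hjS] at hcard; omega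
    · rw [hrk] at hrank; omega

lemma exists_codeword_vanishing (S : Finset (Fin n))
    (hS : finrank F (SpanCols G S) < k) :
    ∃ x : Fin k → F, x ≠ 0 ∧ ∀ j ∈ S, Matrix.vecMul x G j = 0 := by
  classical
  set A : Matrix (Fin k) {j // j ∈ S} F := Matrix.of (fun i j => G i j.1) with hA
  have hrangeA : Set.range A.transpose = G.transpose '' ↑S := by
    ext v; constructor
    · rintro ⟨j, rfl⟩; exact ⟨j.1, j.2, rfl⟩
    · rintro ⟨j, hj, rfl⟩; exact ⟨⟨j, hj⟩, rfl⟩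
  have hrkA : A.rank < k := by
    rw [Matrix.rank_eq_finrank_span_cols, show Set.range A.col = _ from hrangeA]
    exact hS
  have hrn := LinearMap.finrank_range_add_finrank_ker (Matrix.vecMulLinear A)
  have hdom : finrank F (Fin k → F) = k := by rw [Module.finrank_pi]; simp
  have hrange : finrank F (LinearMap.range A.vecMulLinear) = A.rank := by
    rw [range_vecMulLinear]
    have h1 := Matrix.rank_eq_finrank_span_cols A.transpose
    rw [Matrix.col_transpose] at h1
    rw [← h1, Matrix.rank_transpose]
  rw [hdom, hrange] at hrn
  have hkerne : LinearMap.ker A.vecMulLinear ≠ ⊥ := by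
    intro h
    rw [h, finrank_bot] at hrn
    omega
  obtain ⟨x, hxker, hx0⟩ := (Submodule.ne_bot_iff _).1 hkerne
  refine ⟨x, hx0, ?_⟩
  intro j hj
  have hxA : Matrix.vecMul x A = 0 := hxker
  have := congrFun hxA ⟨j, hj⟩
  simpa [Matrix.vecMul, dotProduct, hA] using this

lemma hamming_vanishing_le [DecidableEq F] (x : Fin k → F) (S : Finset (Fin n))
    (hz : ∀ j ∈ S, Matrix.vecMul x G j = 0) :
    hammingNorm (Matrix.vecMul x G) + S.card ≤ n := by
  classical
  set s : Finset (Fin n) := Finset.univ.filter (fun j => Matrix.vecMul x G j ≠ 0) with hs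
  have hnorm : hammingNorm (Matrix.vecMul x G) = s.card := by
    rw [hammingNorm, hs]
  have hdisj : Disjoint s S := by
    rw [Finset.disjoint_left]
    intro a ha haS
    rw [hs, Finset.mem_filter] at ha
    exact ha.2 (hz a haS)
  have hle : (s ∪ S).card ≤ n := by
    simpa using Finset.card_le_card (Finset.subset_univ (s ∪ S))
  rw [Finset.card_union_of_disjoint hdisj] at hle
  omega

end main

theorem bound_batch_restricted_max {F : Type*} [Field F] [Fintype F] [DecidableEq F]
    {k n t r d : ℕ} (G : Matrix (Fin k) (Fin n) F)
    (hrank : G.rank = k)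
    (hB : IsBatchCodeWith G t r)
    (hd : IsLeast {w : ℕ | ∃ x : Fin k → F, x ≠ 0 ∧ hammingNorm (Matrix.vecMul x G) = w} d) :
    ∀ β : ℕ, 1 ≤ β → β ≤ t →
      (k : ℤ) + d + ((β : ℤ) - 1) *
          (⌈(k : ℚ) / ((r : ℚ) * β - β + 1)⌉ - 1) - 1 ≤ (n : ℤ) := by
  intro β hβ1 hβt
  obtain ⟨x₀, hx₀, _⟩ := hd.1
  have hk1 : 1 ≤ k := by
    rcases Nat.eq_zero_or_pos k with rfl | h
    · exact absurd (Subsingleton.elim x₀ 0) hx₀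
    · exact h
  have h0t : 0 < t := lt_of_lt_of_le hβ1 hβt
  have hr1 : 1 ≤ r := by
    by_contra h
    have hr0 : r = 0 := by omega
    obtain ⟨T, hdisj, hT⟩ := hB (fun _ => ⟨0, hk1⟩)
    obtain ⟨c, hc⟩ := (hT ⟨0, h0t⟩).2
    have hTe : T ⟨0, h0t⟩ = ∅ := by
      have := (hT ⟨0, h0t⟩).1
      rw [hr0] at this
      exact Finset.card_eq_zero.1 (Nat.le_zero.1 this)
    rw [hTe, Finset.sum_empty] at hc
    have h01 := congrFun hc ⟨0, hk1⟩
    simp [Pi.single_apply] at h01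
  obtain ⟨r', rfl⟩ : ∃ r', r = r' + 1 := ⟨r - 1, by omega⟩
  set q : ℕ := r' * β + 1 with hqdef
  have hq0 : (0 : ℚ) < (q : ℚ) := by exact_mod_cast Nat.succ_pos (r' * β)
  have hden : ((r' + 1 : ℕ) : ℚ) * (β : ℚ) - (β : ℚ) + 1 = (q : ℚ) := by
    rw [hqdef]; push_cast; ring
  set m : ℤ := ⌈(k : ℚ) / (q : ℚ)⌉ with hmdef
  have hm1 : 1 ≤ m := by
    have : (0 : ℚ) < (k : ℚ) / (q : ℚ) :=
      div_pos (by exact_mod_cast hk1) hq0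
    have := Int.lt_ceil.2 (by simpa using this : ((0 : ℤ) : ℚ) < (k : ℚ) / (q : ℚ))
    omega
  set s₀ : ℕ := (m - 1).toNat with hs₀def
  have hs₀cast : (s₀ : ℤ) = m - 1 := Int.toNat_of_nonneg (by omega)
  have hsq : (s₀ : ℚ) * (q : ℚ) < (k : ℚ) := by
    have h1 : ((m : ℚ) - 1) < (k : ℚ) / (q : ℚ) := by
      have := Int.ceil_lt_add_one ((k : ℚ) / (q : ℚ))
      rw [← hmdef] at this
      linarith
    have h2 : (s₀ : ℚ) = (m : ℚ) - 1 := by exact_mod_cast hs₀cast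
    rw [h2]
    calc ((m : ℚ) - 1) * (q : ℚ) < ((k : ℚ) / (q : ℚ)) * (q : ℚ) :=
          mul_lt_mul_of_pos_right h1 hq0
      _ = (k : ℚ) := div_mul_cancel₀ _ (ne_of_gt hq0)
  have hsqn : s₀ * q < k := by exact_mod_cast hsq
  obtain ⟨S, hS1, hS2⟩ := iterate G hβ1 hβt hB s₀ hsqn
  have hρ : finrank F (SpanCols G S) < k := lt_of_le_of_lt hS2 hsqn
  have htop : Submodule.span F (Set.range G.transpose) = ⊤ := by
    apply Submodule.eq_top_of_finrank_eq
    have h1 := Matrix.rank_eq_finrank_span_cols G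
    rw [hrank] at h1
    rw [show Set.range G.transpose = Set.range G.col from rfl, ← h1, Module.finrank_pi]
    simp
  obtain ⟨S', hsub, hcard', hrk'⟩ :=
    extend_cols G htop (k - 1 - finrank F (SpanCols G S)) S (by omega)
  have hrkS' : finrank F (SpanCols G S') < k := by rw [hrk']; omega
  obtain ⟨x, hx0, hxz⟩ := exists_codeword_vanishing G S' hrkS'
  have hnorm := hamming_vanishing_le G x S' hxz
  have hdle : d ≤ hammingNorm (Matrix.vecMul x G) := hd.2 ⟨x, hx0, rfl⟩
  have hfinal : k + d + s₀ * (β - 1) ≤ n + 1 := by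
    generalize s₀ * (β - 1) = D at hS1 ⊢
    omega
  -- now cast to ℤ
  have hZ : (k : ℤ) + (d : ℤ) + (s₀ : ℤ) * ((β : ℤ) - 1) ≤ (n : ℤ) + 1 := by
    have := hfinal
    have hcast : ((k + d + s₀ * (β - 1) : ℕ) : ℤ) ≤ ((n + 1 : ℕ) : ℤ) := by exact_mod_cast this
    push_cast [Nat.cast_sub hβ1] at hcast
    linarith
  rw [show ((r' + 1 : ℕ) : ℚ) * (β : ℚ) - (β : ℚ) + 1 = (q : ℚ) from hden, ← hmdef, ← hs₀cast]
  linarith
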